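/- A run DAG G is rejecting if and only if it has an F-finite level, i.e., a level k such that every F-node on a level strictly greater than k is finite in G'. -/

import Mathlib

/-- Strict lexicographic order on finite 0-1 profiles. -/
def ProfLt (a b : List Bool) : Prop := List.Lex (· < ·) a b

/-- Non-strict lexicographic order on finite 0-1 profiles. -/
def ProfLe (a b : List Bool) : Prop := a = b ∨ ProfLt a b

/-- A nondeterministic Büchi automaton on infinite words. -/
structure NBW (Q : Type) (σ : Type) where
  init : Set Q
  trans : Q → σ → Set Q
  acc : Q → Bool

namespace NBW

variable {Q σ : Type} (A : NBW Q σ) (w : ℕ → σ)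

/-- `(q,i)` is a vertex of the run DAG of `A` on `w`. -/
def InDag (v : Q × ℕ) : Prop :=
  ∃ p : ℕ → Q, p 0 ∈ A.init ∧ (∀ j, j < v.2 → p (j + 1) ∈ A.trans (p j) (w j)) ∧ p v.2 = v.1

/-- Edge of the run DAG. -/
def Edge (u v : Q × ℕ) : Prop :=
  A.InDag w u ∧ v.2 = u.2 + 1 ∧ v.1 ∈ A.trans u.1 (w u.2)

/-- An infinite initial path through the (sub-)DAG with edge relation `E`. -/
def IsPath (E : Q × ℕ → Q × ℕ → Prop) (π : ℕ → Q × ℕ) : Prop :=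
  (π 0).1 ∈ A.init ∧ (π 0).2 = 0 ∧ ∀ i, E (π i) (π (i + 1))

/-- An accepting path: initial and visiting F-nodes infinitely often. -/
def AcceptingPath (E : Q × ℕ → Q × ℕ → Prop) (π : ℕ → Q × ℕ) : Prop :=
  A.IsPath E π ∧ ∀ N, ∃ i, N ≤ i ∧ A.acc (π i).1 = true

/-- Profile (sequence of acceptance labels) of the first `i+1` states of `p`. -/
def profileOf (p : ℕ → Q) (i : ℕ) : List Bool :=
  (List.range (i + 1)).map fun j => A.acc (p j)

/-- `p` encodes a finite initial run ending at node `v`. -/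
def FinRunTo (p : ℕ → Q) (v : Q × ℕ) : Prop :=
  p 0 ∈ A.init ∧ (∀ j, j < v.2 → p (j + 1) ∈ A.trans (p j) (w j)) ∧ p v.2 = v.1

/-- `h` assigns to each node the lexicographically maximal profile
over all finite initial runs to it. -/
def IsProfileFun (h : Q × ℕ → List Bool) : Prop :=
  ∀ v, A.InDag w v →
    (∃ p, A.FinRunTo w p v ∧ A.profileOf p v.2 = h v) ∧
    ∀ p, A.FinRunTo w p v → ProfLe (A.profileOf p v.2) (h v)

/-- Edges of the pruned DAG `G'`: only edges from predecessors of
lexicographically maximal profile are kept. -/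
def Edge' (h : Q × ℕ → List Bool) (u v : Q × ℕ) : Prop :=
  A.Edge w u v ∧ ∀ u', A.Edge w u' v → ¬ ProfLt (h u) (h u')

/-- `v` is finite in `G'`: it has finitely many descendants in `G'`. -/
def FiniteIn' (h : Q × ℕ → List Bool) (v : Q × ℕ) : Prop :=
  Set.Finite {u | Relation.ReflTransGen (A.Edge' w h) v u}

/-- Vertices of `G''`: vertices of the run DAG that are not finite in `G'`. -/
def InDag'' (h : Q × ℕ → List Bool) (v : Q × ℕ) : Prop :=
  A.InDag w v ∧ ¬ A.FiniteIn' w h v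

/-- Edges of `G''`. -/
def Edge'' (h : Q × ℕ → List Bool) (u v : Q × ℕ) : Prop :=
  A.Edge' w h u v ∧ A.InDag'' w h u ∧ A.InDag'' w h v

/-- `lam` is the retrospective labeling `λ^k`: ⊤ at levels ≤ k, ⊥ on F-nodes
after level k, inherited along `G'`-edges otherwise. -/
def IsRetroLabeling (h : Q × ℕ → List Bool) (k : ℕ) (lam : Q × ℕ → Bool) : Prop :=
  (∀ u, A.InDag w u → u.2 ≤ k → lam u = true) ∧
  (∀ u, A.InDag w u → k < u.2 → A.acc u.1 = true → lam u = false) ∧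
  (∀ u v, k < v.2 → A.acc v.1 = false → A.Edge' w h u v → lam v = lam u)

/-- A labeling is legal when every ⊥-labeled node is finite in `G'`. -/
def Legal (h : Q × ℕ → List Bool) (lam : Q × ℕ → Bool) : Prop :=
  ∀ u, A.InDag w u → lam u = false → A.FiniteIn' w h u

/-- `α(u)`: the number of ⊤-labeled profile-equivalence classes on `u`'s level
whose profile is strictly greater than `h u`. -/
noncomputable def alphaCount (h : Q × ℕ → List Bool) (lam : Q × ℕ → Bool) (u : Q × ℕ) : ℕ :=
  Set.ncard {p : List Bool | ∃ v, A.InDag w v ∧ v.2 = u.2 ∧ lam v = true ∧ h v = p ∧ ProfLt (h u) p}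

/-- The `k`-retrospective ranking (with top rank `m`). -/
noncomputable def retroRank (h : Q × ℕ → List Bool) (lam : Q × ℕ → Bool) (k m : ℕ)
    (u : Q × ℕ) : ℕ :=
  if u.2 ≤ k then m
  else if lam u then 2 * A.alphaCount w h lam u + 1 else 2 * A.alphaCount w h lam u

/-- `m = 2 |Q \ F|`. -/
def mBound [Fintype Q] : ℕ :=
  2 * Finset.card (Finset.univ.filter fun q => A.acc q = false)

end NBW


section LexLemmas

lemma cons_lt_cons_iff' {a b : Bool} {l1 l2 : List Bool} :
    (a :: l1) < (b :: l2) ↔ a < b ∨ (a = b ∧ l1 < l2) := by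
  constructor
  · intro hl
    cases hl with
    | rel h => exact Or.inl h
    | cons h => exact Or.inr ⟨rfl, h⟩
  · rintro (h | ⟨rfl, h⟩)
    · exact List.Lex.rel h
    · exact List.Lex.cons h

lemma cons_le_cons_iff' {a : Bool} {l1 l2 : List Bool} :
    (a :: l1) ≤ (a :: l2) ↔ l1 ≤ l2 := by
  rw [le_iff_lt_or_eq, le_iff_lt_or_eq, cons_lt_cons_iff']
  simp [lt_irrefl]

lemma append_singleton_lt_iff : ∀ (a b : List Bool), a.length = b.length → ∀ x y : Bool,
    (a ++ [x] < b ++ [y] ↔ a < b ∨ (a = b ∧ x < y))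
  | [], [], _, x, y => by
      simp only [List.nil_append]
      constructor
      · intro hl
        cases hl with
        | rel h => exact Or.inr ⟨by trivial, h⟩
        | cons h => exact absurd h List.not_lex_nil
      · rintro (h | ⟨-, h⟩)
        · exact absurd h List.not_lex_nil
        · exact List.Lex.rel h
  | [], _ :: _, hl, _, _ => by simp at hl
  | _ :: _, [], hl, _, _ => by simp at hl
  | a :: t1, b :: t2, hl, x, y => by
      simp only [List.cons_append, cons_lt_cons_iff']
      rw [append_singleton_lt_iff t1 t2 (by simpa using hl) x y]
      constructor
      · rintro (h | ⟨rfl, (h | ⟨rfl, h⟩)⟩)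
        · exact Or.inl (Or.inl h)
        · exact Or.inl (Or.inr ⟨rfl, h⟩)
        · exact Or.inr ⟨rfl, h⟩
      · rintro ((h | ⟨rfl, h⟩) | ⟨heq, h⟩)
        · exact Or.inl h
        · exact Or.inr ⟨rfl, Or.inl h⟩
        · cases heq; exact Or.inr ⟨rfl, Or.inr ⟨rfl, h⟩⟩

end LexLemmas

section LexDerived

lemma append_singleton_lt {a b : List Bool} (hl : a.length = b.length) {x y : Bool}
    (h : a < b) : a ++ [x] < b ++ [y] :=
  (append_singleton_lt_iff a b hl x y).2 (Or.inl h)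

lemma append_singleton_le_append {a b : List Bool} (hl : a.length = b.length) (x : Bool)
    (h : a ≤ b) : a ++ [x] ≤ b ++ [x] := by
  rcases h.lt_or_eq with h | rfl
  · exact (append_singleton_lt hl h).le
  · exact le_rfl

lemma le_of_append_singleton_le {a b : List Bool} (hl : a.length = b.length) {x y : Bool}
    (h : a ++ [x] ≤ b ++ [y]) : a ≤ b := by
  rcases h.lt_or_eq with h | h
  · rcases (append_singleton_lt_iff a b hl x y).1 h with h | ⟨rfl, -⟩
    · exact h.le
    · exact le_rfl
  · exact ((List.append_inj' h rfl).1).le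

lemma take_le_take : ∀ (k : ℕ) (a b : List Bool), a.length = b.length →
    a ≤ b → a.take k ≤ b.take k
  | 0, _, _, _, _ => by simp
  | _ + 1, [], [], _, _ => by simp
  | _ + 1, [], _ :: _, hl, _ => by simp at hl
  | _ + 1, _ :: _, [], hl, _ => by simp at hl
  | k + 1, x :: t1, y :: t2, hl, hle => by
      rcases hle.lt_or_eq with hlt | heq
      · rcases cons_lt_cons_iff'.1 hlt with h | ⟨rfl, h⟩
        · refine le_of_lt ?_
          simp only [List.take_succ_cons]
          exact List.Lex.rel h
        · simp only [List.take_succ_cons]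
          exact cons_le_cons_iff'.2 (take_le_take k t1 t2 (by simpa using hl) h.le)
      · rw [heq]

lemma drop_le_drop : ∀ (k : ℕ) (a b : List Bool), a.length = b.length →
    a.take k = b.take k → a ≤ b → a.drop k ≤ b.drop k
  | 0, _, _, _, _, hle => hle
  | _ + 1, [], [], _, _, _ => by simp
  | _ + 1, [], _ :: _, hl, _, _ => by simp at hl
  | _ + 1, _ :: _, [], hl, _, _ => by simp at hl
  | k + 1, x :: t1, y :: t2, hl, ht, hle => by
      simp only [List.take_succ_cons, List.cons.injEq] at ht
      obtain ⟨rfl, ht⟩ := ht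
      simp only [List.drop_succ_cons]
      exact drop_le_drop k t1 t2 (by simpa using hl) ht (cons_le_cons_iff'.1 hle)

lemma eq_false_of_le_all_false : ∀ (a b : List Bool), a.length = b.length →
    a ≤ b → (∀ x ∈ b, x = false) → ∀ x ∈ a, x = false
  | [], [], _, _, _ => by simp
  | [], _ :: _, hl, _, _ => by simp at hl
  | _ :: _, [], hl, _, _ => by simp at hl
  | x :: t1, y :: t2, hl, hle, hb => by
      have hy : y = false := hb y List.mem_cons_self
      rcases hle.lt_or_eq with hlt | heq
      · rcases cons_lt_cons_iff'.1 hlt with h | ⟨rfl, h⟩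
        · rw [hy] at h; exact absurd (Bool.lt_iff.1 h).2 (by simp)
        · intro z hz
          rcases List.mem_cons.1 hz with rfl | hz
          · exact hy
          · exact eq_false_of_le_all_false t1 t2 (by simpa using hl) h.le
              (fun u hu => hb u (List.mem_cons_of_mem _ hu)) z hz
      · rw [heq]; exact hb

lemma getD_take' (l : List Bool) {k i : ℕ} (h : i < k) (hi : i < l.length) :
    (l.take k).getD i false = l.getD i false := by
  rw [List.getD_eq_getElem _ _ (by simp [hi, h]), List.getD_eq_getElem _ _ hi, List.getElem_take]

lemma exists_max_list {s : Set (List Bool)} (hf : s.Finite) (hn : s.Nonempty) :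
    ∃ a ∈ s, ∀ b ∈ s, b ≤ a := by
  obtain ⟨a, ha, hmax⟩ := hf.exists_maximalFor id s hn
  exact ⟨a, ha, fun b hb => by
    rcases le_or_gt b a with h | h
    · exact h
    · exact hmax hb h.le⟩

end LexDerived


section DagLemmas

open NBW

variable {Q σ : Type} {A : NBW Q σ} {w : ℕ → σ} {h : Q × ℕ → List Bool}

lemma profileOf_length (A : NBW Q σ) (p : ℕ → Q) (n : ℕ) :
    (A.profileOf p n).length = n + 1 := by simp [NBW.profileOf]

lemma profileOf_succ (A : NBW Q σ) (p : ℕ → Q) (n : ℕ) :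
    A.profileOf p (n + 1) = A.profileOf p n ++ [A.acc (p (n + 1))] := by
  simp [NBW.profileOf, List.range_succ]

lemma profileOf_congr {p q : ℕ → Q} {n : ℕ} (hpq : ∀ j ≤ n, p j = q j) :
    A.profileOf p n = A.profileOf q n := by
  unfold NBW.profileOf
  exact List.map_congr_left fun a ha => by
    rw [hpq a (by simpa using Nat.lt_succ_iff.1 (List.mem_range.1 ha))]

lemma profileOf_take {p : ℕ → Q} {n j : ℕ} (hj : j ≤ n) :
    (A.profileOf p n).take (j + 1) = A.profileOf p j := by
  unfold NBW.profileOf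
  rw [← List.map_take, List.take_range, min_eq_left (by omega)]

lemma profileOf_getD {p : ℕ → Q} {n j : ℕ} (hj : j ≤ n) :
    (A.profileOf p n).getD j false = A.acc (p j) := by
  have hlen : j < (A.profileOf p n).length := by rw [profileOf_length]; omega
  rw [List.getD_eq_getElem _ _ hlen]
  unfold NBW.profileOf
  exact (List.getElem_map _).trans (by simp)

lemma inDag_iff {v : Q × ℕ} : A.InDag w v ↔ ∃ p, A.FinRunTo w p v := Iff.rfl

lemma profLt_iff {a b : List Bool} : ProfLt a b ↔ a < b := Iff.rfl

lemma profLe_iff {a b : List Bool} : ProfLe a b ↔ a ≤ b := by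
  constructor
  · rintro (rfl | hlt)
    · exact le_rfl
    · exact le_of_lt hlt
  · intro hle
    rcases hle.lt_or_eq with hlt | rfl
    · exact Or.inr hlt
    · exact Or.inl rfl

/-- length of the profile function value -/
lemma h_length (hprof : A.IsProfileFun w h) {v : Q × ℕ} (hv : A.InDag w v) :
    (h v).length = v.2 + 1 := by
  obtain ⟨⟨p, _, hp⟩, -⟩ := hprof v hv
  rw [← hp, profileOf_length]

/-- last entry of the profile is the acceptance bit -/
lemma h_getD_last (hprof : A.IsProfileFun w h) {v : Q × ℕ} (hv : A.InDag w v) :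
    (h v).getD v.2 false = A.acc v.1 := by
  obtain ⟨⟨p, hrun, hp⟩, -⟩ := hprof v hv
  rw [← hp, profileOf_getD le_rfl, hrun.2.2]

/-- extend a finite run by one transition -/
lemma finRunTo_extend {p : ℕ → Q} {u v : Q × ℕ} (hp : A.FinRunTo w p u)
    (hv2 : v.2 = u.2 + 1) (htr : v.1 ∈ A.trans u.1 (w u.2)) :
    ∃ q : ℕ → Q, A.FinRunTo w q v ∧
      A.profileOf q v.2 = A.profileOf p u.2 ++ [A.acc v.1] := by
  refine ⟨fun j => if j ≤ u.2 then p j else v.1, ⟨?_, ?_, ?_⟩, ?_⟩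
  · simpa using hp.1
  · intro j hj
    rw [hv2] at hj
    rcases Nat.lt_or_ge j u.2 with hj' | hj'
    · simp only [if_pos hj'.le, if_pos (Nat.succ_le_of_lt hj')]
      exact hp.2.1 j hj'
    · have : j = u.2 := by omega
      subst this
      show (if u.2 + 1 ≤ u.2 then p (u.2 + 1) else v.1) ∈
        A.trans (if u.2 ≤ u.2 then p u.2 else v.1) (w u.2)
      rw [if_neg (Nat.not_succ_le_self u.2), if_pos le_rfl, hp.2.2]
      exact htr
  · simp [hv2]
  · rw [hv2, profileOf_succ]
    have h1 : A.profileOf (fun j => if j ≤ u.2 then p j else v.1) u.2 = A.profileOf p u.2 :=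
      profileOf_congr fun j hj => by simp [if_pos hj]
    rw [h1]
    simp

lemma edge_inDag {u v : Q × ℕ} (he : A.Edge w u v) : A.InDag w v := by
  obtain ⟨⟨p, hrun⟩, hv2, htr⟩ := he
  obtain ⟨q, hq, -⟩ := finRunTo_extend hrun hv2 htr
  exact ⟨q, hq⟩

/-- profiles of runs into `v` are bounded by `h v`, and the value along an edge -/
lemma edge_profile_le (hprof : A.IsProfileFun w h) {u v : Q × ℕ} (he : A.Edge w u v) :
    h u ++ [A.acc v.1] ≤ h v := by
  obtain ⟨hu, hv2, htr⟩ := he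
  obtain ⟨⟨p, hrun, hp⟩, -⟩ := hprof u hu
  obtain ⟨q, hq, hqp⟩ := finRunTo_extend hrun hv2 htr
  have := (hprof v (edge_inDag ⟨hu, hv2, htr⟩)).2 q hq
  rw [hqp, hp] at this
  exact profLe_iff.1 this

/-- every positive-level node has an incoming edge realizing its profile -/
lemma exists_edge_profile (hprof : A.IsProfileFun w h) {v : Q × ℕ} (hv : A.InDag w v)
    {n : ℕ} (hv2 : v.2 = n + 1) :
    ∃ u, A.Edge w u v ∧ u.2 = n ∧ h v = h u ++ [A.acc v.1] := by
  obtain ⟨⟨p, hrun, hp⟩, -⟩ := hprof v hv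
  have hu : A.InDag w (p n, n) :=
    ⟨p, hrun.1, fun j hj => hrun.2.1 j (by omega), rfl⟩
  have h6 : p (n + 1) = v.1 := by rw [← hv2, hrun.2.2]
  have htr : v.1 ∈ A.trans (p n) (w n) := by
    have h5 := hrun.2.1 n (by omega)
    rwa [h6] at h5
  have hedge : A.Edge w (p n, n) v := ⟨hu, by simp [hv2], by simpa using htr⟩
  refine ⟨(p n, n), hedge, rfl, ?_⟩
  have h1 : h v = A.profileOf p n ++ [A.acc v.1] := by
    rw [← hp, hv2, profileOf_succ, h6]
  have h2 : A.profileOf p n ≤ h (p n, n) :=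
    profLe_iff.1 ((hprof (p n, n) hu).2 p ⟨hrun.1, fun j hj => hrun.2.1 j (by omega), rfl⟩)
  have hlen : (A.profileOf p n).length = (h (p n, n)).length := by
    rw [profileOf_length, h_length hprof hu]
  have h3 : h (p n, n) ++ [A.acc v.1] ≤ h v := edge_profile_le hprof hedge
  have h4 : h v ≤ h (p n, n) ++ [A.acc v.1] := by
    rw [h1]; exact append_singleton_le_append hlen _ h2
  rw [le_antisymm h3 h4, h1]

end DagLemmas

section PrunedLemmas

open NBW

variable {Q σ : Type} [Finite Q] {A : NBW Q σ} {w : ℕ → σ} {h : Q × ℕ → List Bool}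

lemma level_finite (n : ℕ) : {v : Q × ℕ | v.2 = n}.Finite := by
  have : {v : Q × ℕ | v.2 = n} ⊆ (Set.univ : Set Q) ×ˢ {n} := by
    rintro ⟨q, m⟩ hm
    exact ⟨Set.mem_univ q, hm⟩
  exact (Set.finite_univ.prod (Set.finite_singleton n)).subset this

lemma edge_level {u v : Q × ℕ} (he : A.Edge w u v) : v.2 = u.2 + 1 := he.2.1

lemma edge'_edge {u v : Q × ℕ} (he : A.Edge' w h u v) : A.Edge w u v := he.1

/-- existence of a pruned-DAG predecessor -/
lemma exists_edge' (hprof : A.IsProfileFun w h) {v : Q × ℕ} (hv : A.InDag w v)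
    {n : ℕ} (hv2 : v.2 = n + 1) :
    ∃ u, A.Edge' w h u v ∧ u.2 = n := by
  have hpredfin : {u : Q × ℕ | A.Edge w u v}.Finite :=
    (level_finite n).subset (fun u hu => by
      have := edge_level hu; simp only [Set.mem_setOf_eq]; omega)
  have hpredne : {u : Q × ℕ | A.Edge w u v}.Nonempty := by
    obtain ⟨u, hu, -, -⟩ := exists_edge_profile hprof hv hv2
    exact ⟨u, hu⟩
  obtain ⟨a, ha, hmax⟩ := hpredfin.exists_maximalFor h _ hpredne
  refine ⟨a, ⟨ha, fun u' hu' hlt => ?_⟩, by have := edge_level ha; omega⟩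
  have := hmax hu' (profLt_iff.1 hlt).le
  exact absurd (profLt_iff.1 hlt) (not_lt.2 this)

/-- the profile along a pruned edge -/
lemma edge'_profile (hprof : A.IsProfileFun w h) {u v : Q × ℕ} (he : A.Edge' w h u v) :
    h v = h u ++ [A.acc v.1] := by
  have hv : A.InDag w v := edge_inDag he.1
  obtain ⟨u₀, he₀, hu₀2, hprof₀⟩ := exists_edge_profile hprof hv (edge_level he.1)
  have h1 : h u₀ ≤ h u := by
    rcases le_or_gt (h u₀) (h u) with h' | h'
    · exact h'
    · exact absurd (profLt_iff.2 h') (he.2 u₀ he₀)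
  have hlen : (h u).length = (h u₀).length := by
    rw [h_length hprof he.1.1, h_length hprof he₀.1]
    have := edge_level he.1; have := edge_level he₀; omega
  have h2 : h u ++ [A.acc v.1] ≤ h v := edge_profile_le hprof he.1
  have h3 : h v ≤ h u ++ [A.acc v.1] := by
    rw [hprof₀]
    exact append_singleton_le_append hlen.symm _ h1
  exact (le_antisymm h3 h2).symm ▸ rfl

lemma edge'_level {u v : Q × ℕ} (he : A.Edge' w h u v) : v.2 = u.2 + 1 :=
  edge_level he.1

/-- children in the pruned DAG form a finite set -/
lemma children_finite (v : Q × ℕ) : {u : Q × ℕ | A.Edge' w h v u}.Finite :=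
  (level_finite (v.2 + 1)).subset (fun u hu => edge'_level hu)

/-- a non-finite node has a non-finite child -/
lemma nonfinite_child {v : Q × ℕ} (hv : ¬ A.FiniteIn' w h v) :
    ∃ u, A.Edge' w h v u ∧ ¬ A.FiniteIn' w h u := by
  by_contra hcon
  push_neg at hcon
  apply hv
  have hsub : {u | Relation.ReflTransGen (A.Edge' w h) v u} ⊆
      {v} ∪ ⋃ c ∈ {u : Q × ℕ | A.Edge' w h v u}, {u | Relation.ReflTransGen (A.Edge' w h) c u} := by
    intro u hu
    rcases (Relation.ReflTransGen.cases_head hu) with rfl | ⟨c, hc, hcu⟩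
    · exact Or.inl rfl
    · exact Or.inr (Set.mem_biUnion hc hcu)
  exact ((Set.finite_singleton v).union
    ((children_finite v).biUnion (fun c hc => hcon c hc))).subset hsub

/-- non-finiteness propagates to pruned-DAG predecessors -/
lemma nonfinite_pred {u v : Q × ℕ} (he : A.Edge' w h u v) (hv : ¬ A.FiniteIn' w h v) :
    ¬ A.FiniteIn' w h u := by
  intro hfin
  exact hv (hfin.subset (fun x hx => Relation.ReflTransGen.head he hx))

/-- non-finite ancestor at every lower level -/
lemma nonfinite_ancestor (hprof : A.IsProfileFun w h) :
    ∀ (m : ℕ) (v : Q × ℕ), A.InDag w v → ¬ A.FiniteIn' w h v → ∀ n, v.2 = n + m →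
    ∃ u, A.InDag w u ∧ ¬ A.FiniteIn' w h u ∧ u.2 = n
  | 0, v, hv, hnf, n, hn => ⟨v, hv, hnf, by omega⟩
  | m + 1, v, hv, hnf, n, hn => by
      obtain ⟨u, hu, hu2⟩ := exists_edge' hprof hv (n := n + m) (by omega)
      exact nonfinite_ancestor hprof m u hu.1.1 (nonfinite_pred hu hnf) n hu2

/-- an infinite set of descendants levels implies non-finiteness -/
lemma nonfinite_of_unbounded_desc {v : Q × ℕ}
    (hdesc : ∀ K : ℕ, ∃ u, Relation.ReflTransGen (A.Edge' w h) v u ∧ K < u.2) :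
    ¬ A.FiniteIn' w h v := by
  intro hfin
  have himg : (Prod.snd '' {u | Relation.ReflTransGen (A.Edge' w h) v u}).Finite :=
    hfin.image _
  obtain ⟨K, hK⟩ := himg.bddAbove
  obtain ⟨u, hu, hKu⟩ := hdesc K
  exact absurd (hK (Set.mem_image_of_mem _ hu)) (by omega)

end PrunedLemmas

/-- set of non-finite nodes of the pruned DAG at level `n` -/
def NFset {Q σ : Type} (A : NBW Q σ) (w : ℕ → σ) (h : Q × ℕ → List Bool) (n : ℕ) :
    Set (Q × ℕ) :=
  {v | A.InDag w v ∧ ¬ A.FiniteIn' w h v ∧ v.2 = n}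

/-- profiles of non-finite nodes at level `n` -/
def Cset {Q σ : Type} (A : NBW Q σ) (w : ℕ → σ) (h : Q × ℕ → List Bool) (n : ℕ) :
    Set (List Bool) :=
  h '' NFset A w h n

section ForwardDirection

open NBW

variable {Q σ : Type} [Finite Q] {A : NBW Q σ} {w : ℕ → σ} {h : Q × ℕ → List Bool}

lemma NFset_finite (n : ℕ) : (NFset A w h n).Finite :=
  (level_finite n).subset (fun v hv => hv.2.2)

lemma Cset_finite (n : ℕ) : (Cset A w h n).Finite := (NFset_finite n).image h

lemma h_take_mem_Cset (hprof : A.IsProfileFun w h) :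
    ∀ (k m : ℕ) (v : Q × ℕ), v ∈ NFset A w h (m + k) → (h v).take (m + 1) ∈ Cset A w h m
  | 0, m, v, hv => by
      have hlen : (h v).length = m + 1 := by rw [h_length hprof hv.1, hv.2.2]
      rw [List.take_of_length_le (le_of_eq hlen)]
      exact ⟨v, hv, rfl⟩
  | k + 1, m, v, hv => by
      obtain ⟨u, hu, hu2⟩ := exists_edge' hprof hv.1 (n := m + k) (by have h22 := hv.2.2; omega)
      have hunf : ¬ A.FiniteIn' w h u := nonfinite_pred hu hv.2.1
      have huNF : u ∈ NFset A w h (m + k) := ⟨hu.1.1, hunf, hu2⟩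
      have hprofe : h v = h u ++ [A.acc v.1] := edge'_profile hprof hu
      have hulen : m + 1 ≤ (h u).length := by rw [h_length hprof hu.1.1, hu2]; omega
      rw [hprofe, List.take_append_of_le_length hulen]
      exact h_take_mem_Cset hprof k m u huNF

lemma Cset_image_take (hprof : A.IsProfileFun w h) (n : ℕ) :
    (fun P => P.take (n + 1)) '' Cset A w h (n + 1) = Cset A w h n := by
  apply Set.eq_of_subset_of_subset
  · rintro _ ⟨P, hP, rfl⟩
    obtain ⟨v, hv, rfl⟩ := hP
    exact h_take_mem_Cset hprof 1 n v hv
  · rintro _ ⟨v, hv, rfl⟩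
    obtain ⟨u, hu, hunf⟩ := nonfinite_child hv.2.1
    have huNF : u ∈ NFset A w h (n + 1) := ⟨edge_inDag hu.1, hunf, by rw [edge'_level hu, hv.2.2]⟩
    refine ⟨h u, ⟨u, huNF, rfl⟩, ?_⟩
    show (h u).take (n + 1) = h v
    have hprofe : h u = h v ++ [A.acc u.1] := edge'_profile hprof hu
    have hvlen : (h v).length = n + 1 := by rw [h_length hprof hv.1, hv.2.2]
    rw [hprofe, List.take_append_of_le_length (le_of_eq hvlen.symm),
      List.take_of_length_le (le_of_eq hvlen)]

lemma exists_stab {c : ℕ → ℕ} (hmono : ∀ n, c n ≤ c (n + 1)) {B : ℕ} (hB : ∀ n, c n ≤ B) :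
    ∃ N0, ∀ n, N0 ≤ n → c n = c N0 := by
  by_contra hcon
  push_neg at hcon
  have mono : Monotone c := monotone_nat_of_le_succ hmono
  have key : ∀ j : ℕ, ∃ n, j ≤ c n := by
    intro j
    induction j with
    | zero => exact ⟨0, Nat.zero_le _⟩
    | succ j ih =>
        obtain ⟨n, hn⟩ := ih
        obtain ⟨n', hn', hne⟩ := hcon n
        have : c n < c n' := lt_of_le_of_ne (mono hn') (Ne.symm hne)
        exact ⟨n', by omega⟩
  obtain ⟨n, hn⟩ := key (B + 1)
  exact absurd (hB n) (by omega)

lemma Cset_ncard_le (hprof : A.IsProfileFun w h) (n : ℕ) :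
    (Cset A w h n).ncard ≤ (Cset A w h (n + 1)).ncard := by
  rw [← Cset_image_take hprof n]
  exact Set.ncard_image_le (Cset_finite (n + 1))

lemma Cset_ncard_bound (n : ℕ) : (Cset A w h n).ncard ≤ Nat.card Q := by
  have h1 : (Cset A w h n).ncard ≤ (NFset A w h n).ncard :=
    Set.ncard_image_le (NFset_finite n)
  have h2 : NFset A w h n ⊆ (fun q : Q => (q, n)) '' Set.univ := by
    rintro ⟨q, m⟩ hv
    exact ⟨q, Set.mem_univ q, by simp [hv.2.2.symm]⟩
  have h3 : (NFset A w h n).ncard ≤ ((fun q : Q => (q, n)) '' Set.univ).ncard :=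
    Set.ncard_le_ncard h2 (Set.finite_univ.image _)
  have h4 : ((fun q : Q => (q, n)) '' Set.univ).ncard ≤ (Set.univ : Set Q).ncard :=
    Set.ncard_image_le Set.finite_univ
  rw [Set.ncard_univ] at h4
  omega

end ForwardDirection

section ForwardMain

open NBW

variable {Q σ : Type} [Finite Q] {A : NBW Q σ} {w : ℕ → σ} {h : Q × ℕ → List Bool}

/-- beyond the stabilization level, profiles of non-finite nodes are determined by
their prefix at the stabilization level -/
lemma thread_unique (hprof : A.IsProfileFun w h) {N0 : ℕ}
    (hstab : ∀ n, N0 ≤ n → (Cset A w h n).ncard = (Cset A w h N0).ncard) :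
    ∀ (k : ℕ) (P P' : List Bool), P ∈ Cset A w h (N0 + k) → P' ∈ Cset A w h (N0 + k) →
      P.take (N0 + 1) = P'.take (N0 + 1) → P = P'
  | 0, P, P', hP, hP', htake => by
      obtain ⟨v, hv, rfl⟩ := hP
      obtain ⟨v', hv', rfl⟩ := hP'
      have l1 : (h v).length = N0 + 1 := by rw [h_length hprof hv.1, hv.2.2]
      have l2 : (h v').length = N0 + 1 := by rw [h_length hprof hv'.1, hv'.2.2]
      rwa [List.take_of_length_le (le_of_eq l1), List.take_of_length_le (le_of_eq l2)] at htake
  | k + 1, P, P', hP, hP', htake => by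
      have hinj : Set.InjOn (fun P : List Bool => P.take (N0 + k + 1)) (Cset A w h (N0 + k + 1)) := by
        rw [← Set.ncard_image_iff (Cset_finite _)]
        have : (N0 + k) + 1 = N0 + (k + 1) := by omega
        rw [Cset_image_take hprof (N0 + k), hstab (N0 + k) (by omega),
          hstab (N0 + k + 1) (by omega)]
      have hPk : P.take (N0 + k + 1) ∈ Cset A w h (N0 + k) := by
        rw [← Cset_image_take hprof (N0 + k)]
        exact ⟨P, by rwa [show N0 + k + 1 = N0 + (k + 1) from by omega], rfl⟩
      have hP'k : P'.take (N0 + k + 1) ∈ Cset A w h (N0 + k) := by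
        rw [← Cset_image_take hprof (N0 + k)]
        exact ⟨P', by rwa [show N0 + k + 1 = N0 + (k + 1) from by omega], rfl⟩
      have htk : (P.take (N0 + k + 1)).take (N0 + 1) = (P'.take (N0 + k + 1)).take (N0 + 1) := by
        rw [List.take_take, List.take_take, min_eq_left (by omega)]
        exact htake
      have := thread_unique hprof hstab k _ _ hPk hP'k htk
      exact hinj (by rwa [show N0 + (k + 1) = N0 + k + 1 from by omega] at hP)
        (by rwa [show N0 + (k + 1) = N0 + k + 1 from by omega] at hP') this

/-- Main construction for the forward direction: if there are F-nodes that are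
non-finite in `G'` at unboundedly high levels, then `G` has an accepting path. -/
lemma forward_main (hprof : A.IsProfileFun w h)
    (Hinf : ∀ k : ℕ, ∃ v, A.InDag w v ∧ A.acc v.1 = true ∧ k < v.2 ∧ ¬ A.FiniteIn' w h v) :
    ∃ π : ℕ → Q × ℕ, A.AcceptingPath (A.Edge w) π := by
  classical
  -- stabilization level
  obtain ⟨N0, hN0⟩ := exists_stab (fun n => Cset_ncard_le hprof n)
    (fun n => Cset_ncard_bound (A := A) (w := w) (h := h) n)
  have hstab : ∀ n, N0 ≤ n → (Cset A w h n).ncard = (Cset A w h N0).ncard := hN0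
  -- pigeonhole: a profile P0 at level N0 with F-classes above it at unbounded levels
  have hwit : ∀ k : ℕ, ∃ v, A.InDag w v ∧ A.acc v.1 = true ∧ max k N0 < v.2 ∧
      ¬ A.FiniteIn' w h v := fun k => Hinf (max k N0)
  choose x hx1 hx2 hx3 hx4 using hwit
  have hxNF : ∀ k, x k ∈ NFset A w h (N0 + ((x k).2 - N0)) :=
    fun k => ⟨hx1 k, hx4 k, by have := hx3 k; omega⟩
  have hgmem : ∀ k, (h (x k)).take (N0 + 1) ∈ Cset A w h N0 :=
    fun k => h_take_mem_Cset hprof _ N0 (x k) (hxNF k)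
  have hfib : ∃ P0, {k : ℕ | (h (x k)).take (N0 + 1) = P0}.Infinite := by
    by_contra hcon
    push_neg at hcon
    have : (Set.univ : Set ℕ) ⊆ ⋃ P ∈ Cset A w h N0, {k : ℕ | (h (x k)).take (N0 + 1) = P} := by
      intro k _
      exact Set.mem_biUnion (hgmem k) rfl
    exact Set.infinite_univ (((Cset_finite N0).biUnion
      (fun P _ => hcon P)).subset this)
  obtain ⟨P0, hP0inf⟩ := hfib
  have hP0 : P0 ∈ Cset A w h N0 := by
    obtain ⟨k, hk⟩ := hP0inf.nonempty
    exact hk ▸ hgmem k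
  obtain ⟨v0, hv0NF, hv0P⟩ := hP0
  -- the chain of non-finite nodes starting at v0
  have step : ∀ x : Q × ℕ, ¬ A.FiniteIn' w h x →
      ∃ u, A.Edge' w h x u ∧ ¬ A.FiniteIn' w h u := fun x hx => nonfinite_child hx
  let chainf : ∀ i : ℕ, {x : Q × ℕ // A.InDag w x ∧ ¬ A.FiniteIn' w h x} := fun i =>
    Nat.rec ⟨v0, hv0NF.1, hv0NF.2.1⟩
      (fun _ prev =>
        ⟨Classical.choose (step prev.1 prev.2.2),
         edge_inDag (Classical.choose_spec (step prev.1 prev.2.2)).1.1,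
         (Classical.choose_spec (step prev.1 prev.2.2)).2⟩) i
  set v : ℕ → Q × ℕ := fun i => (chainf i).1 with hv
  have hv0 : v 0 = v0 := rfl
  have hvInDag : ∀ i, A.InDag w (v i) := fun i => (chainf i).2.1
  have hvNF : ∀ i, ¬ A.FiniteIn' w h (v i) := fun i => (chainf i).2.2
  have hvE : ∀ i, A.Edge' w h (v i) (v (i + 1)) := fun i =>
    (Classical.choose_spec (step (chainf i).1 (chainf i).2.2)).1
  have hvlev : ∀ i, (v i).2 = N0 + i := by
    intro i
    induction i with
    | zero => rw [hv0, hv0NF.2.2]; omega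
    | succ i ih => rw [edge'_level (hvE i), ih]; omega
  have hvtake : ∀ i, (h (v i)).take (N0 + 1) = P0 := by
    intro i
    induction i with
    | zero =>
        rw [hv0, List.take_of_length_le (le_of_eq ?_), hv0P]
        rw [h_length hprof hv0NF.1, hv0NF.2.2]
    | succ i ih =>
        rw [edge'_profile hprof (hvE i),
          List.take_append_of_le_length (by rw [h_length hprof (hvInDag i), hvlev i]; omega), ih]
  -- accepting bits occur infinitely often along the chain
  have hacc : ∀ K : ℕ, ∃ i, K ≤ i ∧ A.acc (v i).1 = true := by
    intro K
    obtain ⟨k, hkmem, hkgt⟩ := hP0inf.exists_gt (N0 + K)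
    set n := (x k).2 with hn
    have hngt : N0 + K < n := lt_trans hkgt (by have := hx3 k; omega)
    have hxmem : h (x k) ∈ Cset A w h (N0 + (n - N0)) := ⟨x k, hxNF k, rfl⟩
    have hvmem : h (v (n - N0)) ∈ Cset A w h (N0 + (n - N0)) :=
      ⟨v (n - N0), ⟨hvInDag _, hvNF _, by rw [hvlev]⟩, rfl⟩
    have heq : h (v (n - N0)) = h (x k) :=
      thread_unique hprof hstab (n - N0) _ _ hvmem hxmem (by rw [hvtake, hkmem])
    refine ⟨n - N0, by omega, ?_⟩
    have h1 : (h (v (n - N0))).getD (v (n - N0)).2 false = A.acc (v (n - N0)).1 :=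
      h_getD_last hprof (hvInDag _)
    have h2 : (h (x k)).getD n false = A.acc (x k).1 := h_getD_last hprof (hx1 k)
    have hlev : (v (n - N0)).2 = n := by rw [hvlev]; omega
    rw [← h1, hlev, heq, h2]
    exact hx2 k
  -- build the path: an initial run to `v 0` followed by the chain
  obtain ⟨p, hp⟩ : ∃ p, A.FinRunTo w p (v 0) := hvInDag 0
  have hp2 : (v 0).2 = N0 := by rw [hvlev]; omega
  refine ⟨fun i => if i < N0 then (p i, i) else v (i - N0), ⟨?_, ?_, ?_⟩, ?_⟩
  · by_cases h0 : 0 < N0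
    · simpa [h0] using hp.1
    · have hN00 : N0 = 0 := by omega
      subst hN00
      simp only [if_neg h0, Nat.sub_zero]
      have hpv : p 0 = (v 0).1 := by
        have h9 := hp.2.2
        rwa [hp2] at h9
      rw [← hpv]
      exact hp.1
  · by_cases h0 : 0 < N0
    · simp [h0]
    · have hN00 : N0 = 0 := by omega
      subst hN00
      simp only [if_neg h0, Nat.sub_zero]
      simp [hvlev]
  · intro i
    have hInDagpi : ∀ j, j < N0 → A.InDag w (p j, j) :=
      fun j hj => ⟨p, hp.1, fun l hl => hp.2.1 l (by rw [hp2]; omega), rfl⟩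
    by_cases hi1 : i + 1 < N0
    · have hi : i < N0 := by omega
      simp only [if_pos hi, if_pos hi1]
      exact ⟨hInDagpi i hi, rfl, hp.2.1 i (by rw [hp2]; omega)⟩
    · by_cases hi : i < N0
      · have hiN : i + 1 = N0 := by omega
        simp only [if_pos hi, if_neg hi1]
        have hsub : i + 1 - N0 = 0 := by omega
        rw [hsub]
        refine ⟨hInDagpi i hi, by rw [hp2]; omega, ?_⟩
        show (v 0).1 ∈ A.trans (p i) (w i)
        have hpv : p N0 = (v 0).1 := by
          have h9 := hp.2.2
          rwa [hp2] at h9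
        rw [← hpv, ← hiN]
        exact hp.2.1 i (by rw [hp2]; omega)
      · have e1 : ¬ (i + 1 < N0) := by omega
        simp only [if_neg hi, if_neg e1]
        have : i + 1 - N0 = (i - N0) + 1 := by omega
        rw [this]
        exact edge'_edge (hvE (i - N0))
  · intro N
    obtain ⟨i, hiK, hiacc⟩ := hacc N
    refine ⟨N0 + i, by omega, ?_⟩
    simp only [if_neg (by omega : ¬ (N0 + i < N0)), Nat.add_sub_cancel_left]
    exact hiacc

end ForwardMain

section BackwardDirection

open NBW

variable {Q σ : Type} [Finite Q] {A : NBW Q σ} {w : ℕ → σ} {h : Q × ℕ → List Bool}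

lemma path_level {π : ℕ → Q × ℕ} (hπ : A.IsPath (A.Edge w) π) : ∀ i, (π i).2 = i := by
  intro i
  induction i with
  | zero => exact hπ.2.1
  | succ i ih => rw [edge_level (hπ.2.2 i), ih]

lemma path_finRunTo {π : ℕ → Q × ℕ} (hπ : A.IsPath (A.Edge w) π) (n : ℕ) :
    A.FinRunTo w (fun i => (π i).1) (π n) := by
  refine ⟨hπ.1, ?_, ?_⟩
  · intro j hj
    have := (hπ.2.2 j).2.2
    rwa [path_level hπ j] at this
  · rw [path_level hπ n]

lemma path_inDag {π : ℕ → Q × ℕ} (hπ : A.IsPath (A.Edge w) π) (n : ℕ) :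
    A.InDag w (π n) :=
  ⟨fun i => (π i).1, path_finRunTo hπ n⟩

/-- splicing a finite run onto the tail of an accepting path -/
lemma splice {π : ℕ → Q × ℕ} (hπ : A.AcceptingPath (A.Edge w) π) {n : ℕ} {u : Q × ℕ}
    (hu2 : u.2 = n) (hue : A.Edge w u (π (n + 1))) {p : ℕ → Q} (hp : A.FinRunTo w p u) :
    ∃ π', A.AcceptingPath (A.Edge w) π' ∧
      A.profileOf (fun i => (π' i).1) n = A.profileOf p n := by
  refine ⟨fun i => if i ≤ n then (p i, i) else π i, ⟨⟨?_, ?_, ?_⟩, ?_⟩, ?_⟩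
  · simpa using hp.1
  · simp
  · intro i
    have hpin : ∀ j, j ≤ n → A.InDag w (p j, j) :=
      fun j hj => ⟨p, hp.1, fun l hl => hp.2.1 l (by omega), rfl⟩
    rcases Nat.lt_or_ge i n with hi | hi
    · simp only [if_pos hi.le, if_pos (Nat.succ_le_of_lt hi)]
      exact ⟨hpin i hi.le, rfl, hp.2.1 i (by omega)⟩
    · by_cases hin : i = n
      · subst hin
        simp only [if_pos le_rfl, if_neg (Nat.not_succ_le_self i)]
        refine ⟨hpin i le_rfl, by rw [path_level hπ.1], ?_⟩
        have hpu : p i = u.1 := by rw [← hu2]; exact hp.2.2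
        show (π (i + 1)).1 ∈ A.trans (p i) (w i)
        have h9 := hue.2.2
        rw [hu2] at h9
        rw [hpu]
        exact h9
      · have hgt : n < i := by omega
        simp only [if_neg (by omega : ¬ i ≤ n), if_neg (by omega : ¬ i + 1 ≤ n)]
        exact hπ.1.2.2 i
  · intro N
    obtain ⟨i, hi, hacc⟩ := hπ.2 (max N (n + 1))
    refine ⟨i, by omega, ?_⟩
    simpa [if_neg (by omega : ¬ i ≤ n)] using hacc
  · exact profileOf_congr (fun j hj => by simp [if_pos hj])

/-- the set of level-`n` profiles of accepting paths -/
def PrefSet (A : NBW Q σ) (w : ℕ → σ) (n : ℕ) : Set (List Bool) :=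
  {l | ∃ π, A.AcceptingPath (A.Edge w) π ∧ A.profileOf (fun i => (π i).1) n = l}

lemma PrefSet_finite (n : ℕ) : (PrefSet A w n).Finite :=
  (List.finite_length_eq Bool (n + 1)).subset
    (fun l ⟨π, hπ, hl⟩ => by simp only [Set.mem_setOf_eq, ← hl, profileOf_length])

end BackwardDirection

section BackwardMain

open NBW

variable {Q σ : Type} [Finite Q] {A : NBW Q σ} {w : ℕ → σ} {h : Q × ℕ → List Bool}

lemma backward_main (hprof : A.IsProfileFun w h) {π0 : ℕ → Q × ℕ}
    (hπ0 : A.AcceptingPath (A.Edge w) π0) (k : ℕ) :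
    ∃ v, A.InDag w v ∧ A.acc v.1 = true ∧ k < v.2 ∧ ¬ A.FiniteIn' w h v := by
  classical
  have hne : ∀ n, (PrefSet A w n).Nonempty := fun n => ⟨_, π0, hπ0, rfl⟩
  have hmax : ∀ n, ∃ l ∈ PrefSet A w n, ∀ b ∈ PrefSet A w n, b ≤ l :=
    fun n => exists_max_list (PrefSet_finite n) (hne n)
  choose L hLmem hLmax using hmax
  have hLmem' : ∀ n, ∃ π, A.AcceptingPath (A.Edge w) π ∧
      A.profileOf (fun i => (π i).1) n = L n := fun n => hLmem n
  choose πw hπw hπwprof using hLmem'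
  have hLlen : ∀ n, (L n).length = n + 1 := fun n => by
    rw [← hπwprof n, profileOf_length]
  have hprofj : ∀ n j, j ≤ n →
      A.profileOf (fun i => ((πw n) i).1) j = (L n).take (j + 1) := fun n j hj => by
    rw [← hπwprof n, profileOf_take hj]
  -- Key 1 : prefix coherence of the maximal profiles
  have hK1 : ∀ n j, j ≤ n → (L n).take (j + 1) = L j := by
    intro n j hj
    apply le_antisymm
    · exact hLmax j _ ⟨πw n, hπw n, hprofj n j hj⟩
    · have h2 := hLmax n _ (⟨πw j, hπw j, rfl⟩ :
        A.profileOf (fun i => ((πw j) i).1) n ∈ PrefSet A w n)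
      have h3 := take_le_take (j + 1) _ _ (by rw [profileOf_length, hLlen]) h2
      rwa [profileOf_take hj, hπwprof j] at h3
  -- Key 2 : nodes on maximal paths have profile `L j`
  have hK2 : ∀ n j, j ≤ n → h ((πw n) j) = L j := by
    intro n j hj
    have hlev : ((πw n) j).2 = j := path_level (hπw n).1 j
    have hub : A.InDag w ((πw n) j) := path_inDag (hπw n).1 j
    apply le_antisymm
    · obtain ⟨p, hp, hpeq⟩ := (hprof _ hub).1
      obtain ⟨π', hπ', hπ'prof⟩ := splice (hπw n) hlev ((hπw n).1.2.2 j) hp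
      have heq : A.profileOf p j = h ((πw n) j) := by
        rw [hlev] at hpeq
        exact hpeq
      exact hLmax j _ ⟨π', hπ', by rw [hπ'prof, heq]⟩
    · have h4 := (hprof _ hub).2 (fun i => ((πw n) i).1) (path_finRunTo (hπw n).1 j)
      rw [hlev] at h4
      have h5 := profLe_iff.1 h4
      rwa [hprofj n j hj, hK1 n j hj] at h5
  -- Key 3 : maximal paths are pruned-DAG paths
  have hK3 : ∀ n j, j + 1 ≤ n → A.Edge' w h ((πw n) j) ((πw n) (j + 1)) := by
    intro n j hj
    refine ⟨(hπw n).1.2.2 j, ?_⟩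
    intro u' hu' hlt
    have hu'2 : u'.2 = j := by
      have h6 := edge_level hu'
      have h7 := path_level (hπw n).1 (j + 1)
      omega
    obtain ⟨p', hp', hp'eq⟩ := (hprof u' hu'.1).1
    obtain ⟨π', hπ', hπ'prof⟩ := splice (hπw n) hu'2 hu' hp'
    have heq : A.profileOf p' j = h u' := by
      rw [hu'2] at hp'eq
      exact hp'eq
    have hle : h u' ≤ L j := by
      have := hLmax j _ (⟨π', hπ', hπ'prof⟩ : A.profileOf p' j ∈ PrefSet A w j)
      rwa [heq] at this
    rw [profLt_iff, hK2 n j (by omega)] at hlt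
    exact absurd hlt (not_lt.2 hle)
  -- Key 4 : reachability along maximal paths
  have hK4 : ∀ n j m, j ≤ m → m ≤ n →
      Relation.ReflTransGen (A.Edge' w h) ((πw n) j) ((πw n) m) := by
    intro n j m hjm hmn
    induction m, hjm using Nat.le_induction with
    | base => exact Relation.ReflTransGen.refl
    | succ m hm ih =>
        exact (ih (by omega)).tail (hK3 n m (by omega))
  -- Key 5 : the limit bit sequence has infinitely many `true`s
  have hK5 : ∀ N : ℕ, ∃ j, N < j ∧ (L j).getD j false = true := by
    intro N
    obtain ⟨i, hi, hacc⟩ := (hπw N).2 (N + 1)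
    by_contra hcon
    push_neg at hcon
    set a := A.profileOf (fun i => ((πw N) i).1) i with ha
    have halen : a.length = i + 1 := profileOf_length A _ i
    have haL : a ≤ L i := hLmax i _ ⟨πw N, hπw N, rfl⟩
    have hatake : a.take (N + 1) = (L i).take (N + 1) := by
      rw [ha, profileOf_take (by omega : N ≤ i), hπwprof N, hK1 i N (by omega)]
    have habit : a.getD i false = true := by
      rw [ha, profileOf_getD le_rfl]
      exact hacc
    have hdle : a.drop (N + 1) ≤ (L i).drop (N + 1) :=
      drop_le_drop _ _ _ (by rw [halen, hLlen]) hatake haL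
    have hLfalse : ∀ x ∈ (L i).drop (N + 1), x = false := by
      intro x hx
      obtain ⟨r, hr, hxr⟩ := List.mem_iff_getElem.1 hx
      have hjle : N + 1 + r ≤ i := by
        rw [List.length_drop, hLlen] at hr
        omega
      have hidx : N + 1 + r < (L i).length := by rw [hLlen]; omega
      have h1 : x = (L i).getD (N + 1 + r) false := by
        rw [List.getD_eq_getElem _ _ hidx, ← hxr, List.getElem_drop]
      have h2 : (L i).getD (N + 1 + r) false = (L (N + 1 + r)).getD (N + 1 + r) false := by
        rw [← hK1 i (N + 1 + r) hjle, getD_take' (L i) (by omega) hidx]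
      have h3 := hcon (N + 1 + r) (by omega)
      rw [h1, h2]
      exact Bool.not_eq_true _ ▸ h3
    have hafalse : ∀ x ∈ a.drop (N + 1), x = false :=
      eq_false_of_le_all_false _ _
        (by rw [List.length_drop, List.length_drop, halen, hLlen]) hdle hLfalse
    have hmem : (true : Bool) ∈ a.drop (N + 1) := by
      have hlen2 : i - (N + 1) < (a.drop (N + 1)).length := by
        rw [List.length_drop, halen]
        omega
      have h8 : (a.drop (N + 1))[i - (N + 1)] = true := by
        rw [List.getElem_drop]
        have h9 : N + 1 + (i - (N + 1)) = i := by omega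
        rw [← habit, List.getD_eq_getElem _ _ (by rw [halen]; omega)]
        congr 1
      exact h8 ▸ List.getElem_mem hlen2
    exact absurd (hafalse true hmem) (by simp)
  -- conclusion
  obtain ⟨j, hjk, hjbit⟩ := hK5 k
  obtain ⟨q, hq⟩ := Finite.exists_infinite_fiber (fun m : ℕ => ((πw (m + j)) j).1)
  have hfibinf : ((fun m : ℕ => ((πw (m + j)) j).1) ⁻¹' {q}).Infinite :=
    Set.infinite_coe_iff.1 hq
  have hnode : ∀ m, m ∈ ((fun m : ℕ => ((πw (m + j)) j).1) ⁻¹' {q}) →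
      (πw (m + j)) j = (q, j) := by
    intro m hm
    have h1 : ((πw (m + j)) j).1 = q := hm
    have h2 : ((πw (m + j)) j).2 = j := path_level (hπw (m + j)).1 j
    exact Prod.ext h1 h2
  obtain ⟨m0, hm0⟩ := hfibinf.nonempty
  have hdag : A.InDag w (q, j) := by
    rw [← hnode m0 hm0]
    exact path_inDag (hπw (m0 + j)).1 j
  refine ⟨(q, j), hdag, ?_, hjk, ?_⟩
  · have h1 := h_getD_last hprof hdag
    have h2 : h (q, j) = L j := by
      rw [← hnode m0 hm0]
      exact hK2 (m0 + j) j (by omega)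
    rw [← h1, h2]
    exact hjbit
  · apply nonfinite_of_unbounded_desc
    intro K
    obtain ⟨m, hmfib, hmK⟩ := hfibinf.exists_gt K
    refine ⟨(πw (m + j)) (m + j), ?_, ?_⟩
    · have := hK4 (m + j) j (m + j) (by omega) le_rfl
      rwa [hnode m hmfib] at this
    · rw [path_level (hπw (m + j)).1]
      omega

end BackwardMain


/-- `G` is rejecting iff it has an F-finite level. -/
theorem stmt9 {Q σ : Type} [Finite Q] (A : NBW Q σ) (w : ℕ → σ) (h : Q × ℕ → List Bool)
    (hprof : A.IsProfileFun w h) :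
    (¬ ∃ π : ℕ → Q × ℕ, A.AcceptingPath (A.Edge w) π) ↔
    (∃ k : ℕ, ∀ v, A.InDag w v → A.acc v.1 = true → k < v.2 → A.FiniteIn' w h v) := by
  constructor
  · intro hrej
    by_contra hcon
    push_neg at hcon
    exact hrej (forward_main hprof hcon)
  · rintro ⟨k, hk⟩ ⟨π, hπ⟩
    obtain ⟨v, hdag, hacc, hlt, hnf⟩ := backward_main hprof hπ k
    exact hnf (hk v hdag hacc hlt)
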